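/- Let X be a nonempty set, H = {H_x}_{x∈X} a bundle of Hilbert spaces, and K an H-operator-valued kernel (K(y,x) ∈ B(H_x, H_y)). Then K is positive semidefinite if and only if K admits a Hilbert space linearisation, i.e., there exist a Hilbert space K' and bounded operators V(x) : H_x → K' such that K(x,y) = V(x)* V(y) for all x, y ∈ X. -/

import Mathlib

/-- A Hilbert space linearisation (Kolmogorov decomposition) of an operator valued
kernel `K` over a bundle of Hilbert spaces `H`: a Hilbert space `space` and bounded
operators `V x : H x →L K'` such that `K x y = V(x)* V(y)`. -/
structure Linearisation {X : Type} (H : X → Type)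
    [∀ x, NormedAddCommGroup (H x)] [∀ x, InnerProductSpace ℝ (H x)]
    [∀ x, CompleteSpace (H x)]
    (K : ∀ y x : X, H x →L[ℝ] H y) where
  space : Type
  [grp : NormedAddCommGroup space]
  [ips : InnerProductSpace ℝ space]
  [cpl : CompleteSpace space]
  V : ∀ x, H x →L[ℝ] space
  factor : ∀ x y, K x y = ((V x).adjoint).comp (V y)

attribute [instance] Linearisation.grp Linearisation.ips Linearisation.cpl

set_option linter.unusedSectionVars false

namespace KolmogorovAux

open scoped Classical

variable {X : Type} {H : X → Type}
    [∀ x, NormedAddCommGroup (H x)] [∀ x, InnerProductSpace ℝ (H x)]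
    [∀ x, CompleteSpace (H x)]
    (K : ∀ y x : X, H x →L[ℝ] H y)

/-- The pointwise bilinear form `(h, g) ↦ ⟪K y x h, g⟫`. -/
noncomputable def m (x y : X) : H x →ₗ[ℝ] H y →ₗ[ℝ] ℝ :=
  LinearMap.mk₂ ℝ (fun h g => inner ℝ (K y x h) g)
    (fun h h' g => by simp [inner_add_left])
    (fun c h g => by simp [real_inner_smul_left])
    (fun h g g' => by simp [inner_add_right])
    (fun c h g => by simp [real_inner_smul_right])

@[simp] lemma m_apply (x y : X) (h : H x) (g : H y) :
    m K x y h g = inner ℝ (K y x h) g := rfl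

/-- The pre-inner-product on the algebraic direct sum. -/
noncomputable def B : (Π₀ x, H x) →ₗ[ℝ] (Π₀ x, H x) →ₗ[ℝ] ℝ :=
  DFinsupp.lsum ℝ fun x =>
    ((DFinsupp.lsum ℝ :
        (∀ y, H y →ₗ[ℝ] ℝ) ≃ₗ[ℝ] ((Π₀ y, H y) →ₗ[ℝ] ℝ)).toLinearMap).comp
      (LinearMap.pi fun y => m K x y)

@[simp] lemma B_single_single (x y : X) (h : H x) (g : H y) :
    B K (DFinsupp.single x h) (DFinsupp.single y g) = inner ℝ (K y x h) g := by
  simp [B, DFinsupp.lsum_single]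


lemma B_comm (herm : ∀ x y, K y x = (K x y).adjoint) (f g : Π₀ x, H x) :
    B K f g = B K g f := by
  have key : B K = (B K).flip := by
    refine DFinsupp.lhom_ext fun x h => ?_
    refine DFinsupp.lhom_ext fun y g => ?_
    simp only [LinearMap.flip_apply, B_single_single]
    rw [herm x y, ContinuousLinearMap.adjoint_inner_left]
    exact real_inner_comm _ _
  conv_lhs => rw [key]
  rfl

lemma B_apply_eq_sum (f g : Π₀ x, H x) :
    B K f g = ∑ x ∈ f.support, ∑ y ∈ g.support, (inner ℝ (K y x (f x)) (g y) : ℝ) := by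
  simp [B, DFinsupp.lsum_apply_apply, DFinsupp.sumAddHom_apply, LinearMap.sum_apply, DFinsupp.sum]

lemma B_nonneg
    (hp : ∀ (n : ℕ) (xs : Fin n → X) (h : ∀ i, H (xs i)),
      0 ≤ ∑ i, ∑ j, (inner ℝ (K (xs j) (xs i) (h i)) (h j) : ℝ))
    (f : Π₀ x, H x) : 0 ≤ B K f f := by
  classical
  set s := f.support with hs
  let e : s ≃ Fin s.card := s.equivFin
  have h0 := hp s.card (fun i => ((e.symm i : s) : X)) (fun i => f ((e.symm i : s) : X))
  refine h0.trans (le_of_eq ?_)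
  rw [B_apply_eq_sum]
  rw [← Finset.sum_coe_sort s]
  rw [← Equiv.sum_comp e.symm (fun a : s => ∑ y ∈ s, (inner ℝ (K y a (f a)) (f y) : ℝ))]
  refine Finset.sum_congr rfl fun i _ => ?_
  rw [← Finset.sum_coe_sort s]
  rw [← Equiv.sum_comp e.symm
    (fun b : s => (inner ℝ (K b ((e.symm i : s) : X) (f ((e.symm i : s) : X))) (f b) : ℝ))]


/-- The pre-inner-product space core on the algebraic direct sum. -/
noncomputable def core (herm : ∀ x y, K y x = (K x y).adjoint)
    (hp : ∀ (n : ℕ) (xs : Fin n → X) (h : ∀ i, H (xs i)),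
      0 ≤ ∑ i, ∑ j, (inner ℝ (K (xs j) (xs i) (h i)) (h j) : ℝ)) :
    PreInnerProductSpace.Core ℝ (Π₀ x, H x) where
  inner f g := B K f g
  conj_inner_symm f g := by simpa using B_comm K herm g f
  re_inner_nonneg f := by simpa using B_nonneg K hp f
  add_left f f' g := by simp
  smul_left f g r := by simp

/-- Construction of the linearisation from positivity. -/
noncomputable def lin (herm : ∀ x y, K y x = (K x y).adjoint)
    (hp : ∀ (n : ℕ) (xs : Fin n → X) (h : ∀ i, H (xs i)),
      0 ≤ ∑ i, ∑ j, (inner ℝ (K (xs j) (xs i) (h i)) (h j) : ℝ)) :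
    Linearisation H K := by
  letI c : PreInnerProductSpace.Core ℝ (Π₀ x, H x) := core K herm hp
  letI : Inner ℝ (Π₀ x, H x) := c.toInner
  letI sg : SeminormedAddCommGroup (Π₀ x, H x) :=
    @InnerProductSpace.Core.toSeminormedAddCommGroup ℝ (Π₀ x, H x) _ _ _ c
  letI ns : NormedSpace ℝ (Π₀ x, H x) :=
    @InnerProductSpace.Core.toNormedSpace ℝ (Π₀ x, H x) _ _ _ c
  letI ip : InnerProductSpace ℝ (Π₀ x, H x) :=
    { toNormedSpace := ns
      toInner := c.toInner
      norm_sq_eq_re_inner := fun x => by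
        have hnn : (0 : ℝ) ≤ RCLike.re (inner (𝕜 := ℝ) x x) := c.re_inner_nonneg x
        have hn : ‖x‖ = Real.sqrt (RCLike.re (inner (𝕜 := ℝ) x x)) := rfl
        rw [hn, Real.sq_sqrt hnn]
      conj_inner_symm := c.conj_inner_symm
      add_left := c.add_left
      smul_left := c.smul_left }
  have inner_single : ∀ (x y : X) (h : H x) (g : H y),
      (inner (𝕜 := ℝ) (DFinsupp.single x h) (DFinsupp.single y g) : ℝ)
        = inner ℝ (K y x h) g := fun x y h g => B_single_single K x y h g
  have bound : ∀ (x : X) (h : H x),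
      ‖DFinsupp.single x h‖ ≤ Real.sqrt ‖K x x‖ * ‖h‖ := by
    intro x h
    have hn : ‖DFinsupp.single x h‖
        = Real.sqrt (inner (𝕜 := ℝ) (DFinsupp.single x h) (DFinsupp.single x h)) := rfl
    rw [hn, inner_single]
    have h1 : (inner ℝ (K x x h) h : ℝ) ≤ ‖K x x‖ * ‖h‖ ^ 2 := by
      calc (inner ℝ (K x x h) h : ℝ) ≤ ‖K x x h‖ * ‖h‖ := real_inner_le_norm _ _
        _ ≤ ‖K x x‖ * ‖h‖ * ‖h‖ :=
            mul_le_mul_of_nonneg_right ((K x x).le_opNorm h) (norm_nonneg _)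
        _ = ‖K x x‖ * ‖h‖ ^ 2 := by ring
    calc Real.sqrt (inner ℝ (K x x h) h : ℝ) ≤ Real.sqrt (‖K x x‖ * ‖h‖ ^ 2) :=
          Real.sqrt_le_sqrt h1
      _ = Real.sqrt ‖K x x‖ * ‖h‖ := by
          rw [Real.sqrt_mul (norm_nonneg _), Real.sqrt_sq (norm_nonneg _)]
  let V₀ : ∀ x : X, H x →L[ℝ] (Π₀ x, H x) := fun x =>
    LinearMap.mkContinuous (DFinsupp.lsingle x) (Real.sqrt ‖K x x‖) (bound x)
  let J : (Π₀ x, H x) →L[ℝ] UniformSpace.Completion (Π₀ x, H x) :=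
    UniformSpace.Completion.toComplL
  refine ⟨UniformSpace.Completion (Π₀ x, H x), fun x => J.comp (V₀ x), fun x y => ?_⟩
  ext g
  refine (ext_inner_right ℝ fun h => ?_)
  rw [ContinuousLinearMap.comp_apply, ContinuousLinearMap.adjoint_inner_left]
  show (inner ℝ (K x y g) h : ℝ) = inner ℝ (J (V₀ y g)) (J (V₀ x h))
  have hJ : ∀ f : Π₀ x, H x, J f = (f : UniformSpace.Completion (Π₀ x, H x)) := fun f => rfl
  rw [hJ, hJ, UniformSpace.Completion.inner_coe]
  show (inner ℝ (K x y g) h : ℝ) = inner ℝ (DFinsupp.single y g) (DFinsupp.single x h)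
  rw [inner_single]

end KolmogorovAux

set_option maxHeartbeats 1600000 in
/-- An operator valued kernel is positive semidefinite if and only if it admits a
Hilbert space linearisation (Kolmogorov decomposition). -/
theorem posSemidef_iff_linearisation {X : Type} (H : X → Type)
    [∀ x, NormedAddCommGroup (H x)] [∀ x, InnerProductSpace ℝ (H x)]
    [∀ x, CompleteSpace (H x)]
    (K : ∀ y x : X, H x →L[ℝ] H y)
    (herm : ∀ x y, K y x = (K x y).adjoint) :
    (∀ (n : ℕ) (xs : Fin n → X) (h : ∀ i, H (xs i)),
        0 ≤ ∑ i, ∑ j, (inner ℝ (K (xs j) (xs i) (h i)) (h j) : ℝ)) ↔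
      Nonempty (Linearisation H K) := by
  constructor
  · intro hp
    exact ⟨KolmogorovAux.lin K herm hp⟩
  · rintro ⟨L⟩ n xs h
    set u : Fin n → L.space := fun i => L.V (xs i) (h i) with hu
    have key : ∀ i j, (inner ℝ (K (xs j) (xs i) (h i)) (h j) : ℝ)
        = (inner ℝ (u i) (u j) : ℝ) := by
      intro i j
      rw [L.factor (xs j) (xs i), ContinuousLinearMap.comp_apply]
      exact ContinuousLinearMap.adjoint_inner_left _ _ _
    simp_rw [key]
    have expand : ∑ i, ∑ j, (inner ℝ (u i) (u j) : ℝ)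
        = inner ℝ (∑ i, u i) (∑ j, u j) := by
      rw [sum_inner]
      exact Finset.sum_congr rfl fun i _ => (inner_sum _ _ _).symm
    rw [expand]
    exact real_inner_self_nonneg
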